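/- arXiv:1802.04769 — 2 statements merged into one kernel-verified Lean document; each statement's English description precedes it below -/
import Mathlib

section
/- Let ν > 1 and ω, A, V, R > 0, and for r ∈ (0,1) define the dual function q(r) = ω·(A/r)^r·((ν−1)·V)^{1/(ν−1)}·(R/(1−r))^{1−r}·(r + 1/(ν−1))^{r+1/(ν−1)}·(1−r)^{1−r}. Then weak duality holds for the geometric program (P1): for every r ∈ (0,1) and every λ > 0, S > 0 satisfying A·λ^{−1} + V·S^{1−ν} ≤ 1 and R·λ^{−1} ≤ 1, one has q(r) ≤ ω·λ·S. -/
set_option autoImplicit false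

/-- Weak duality for the geometric program (P1): for every dual variable r ∈ (0,1) and
    every primal feasible pair λ, S > 0 (i.e. A·λ⁻¹ + V·S^{1−ν} ≤ 1 and R·λ⁻¹ ≤ 1),
    the dual function q(r) is a lower bound for the primal objective ω·λ·S. -/
theorem gp_weak_duality (ν ω A V R : ℝ) (hν : 1 < ν)
    (hω : 0 < ω) (hA : 0 < A) (hV : 0 < V) (hR : 0 < R) :
    ∀ r : ℝ, r ∈ Set.Ioo (0 : ℝ) 1 →
      ∀ lam S : ℝ, 0 < lam → 0 < S →
        A * lam⁻¹ + V * S ^ (1 - ν) ≤ 1 → R * lam⁻¹ ≤ 1 →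
          ω * (A / r) ^ r * ((ν - 1) * V) ^ (1 / (ν - 1)) * (R / (1 - r)) ^ (1 - r) *
              (r + 1 / (ν - 1)) ^ (r + 1 / (ν - 1)) * (1 - r) ^ (1 - r)
            ≤ ω * lam * S := by
  intro r hr lam S hlam hS hcon1 hcon2
  obtain ⟨hr0, hr1⟩ := hr
  have hν1 : (0:ℝ) < ν - 1 := by linarith
  set c : ℝ := 1 / (ν - 1) with hc_def
  have hc : 0 < c := by positivity
  have hrc : 0 < r + c := by linarith
  have h1r : (0:ℝ) < 1 - r := by linarith
  set u : ℝ := A / lam with hu_def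
  set v : ℝ := V * S ^ (1 - ν) with hv_def
  set w : ℝ := R / lam with hw_def
  have hSp : (0:ℝ) < S ^ (1 - ν) := Real.rpow_pos_of_pos hS _
  have hu : 0 < u := by positivity
  have hv : 0 < v := by positivity
  have hw : 0 < w := by positivity
  have huv : u + v ≤ 1 := by
    rw [hu_def, div_eq_mul_inv]; exact hcon1
  have hw1 : w ≤ 1 := by
    rw [hw_def, div_eq_mul_inv]; exact hcon2
  -- weighted AM-GM
  have hw₁ : (0:ℝ) ≤ r/(r+c) := by positivity
  have hw₂ : (0:ℝ) ≤ c/(r+c) := by positivity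
  have hp₁ : (0:ℝ) ≤ u*(r+c)/r := by positivity
  have hp₂ : (0:ℝ) ≤ v*(r+c)/c := by positivity
  have hsum : r/(r+c) + c/(r+c) = 1 := by field_simp
  have key := Real.geom_mean_le_arith_mean2_weighted hw₁ hw₂ hp₁ hp₂ hsum
  have keyr : r/(r+c) * (u*(r+c)/r) + c/(r+c) * (v*(r+c)/c) = u + v := by
    field_simp
  rw [keyr] at key
  have key1 : (u*(r+c)/r) ^ (r/(r+c)) * (v*(r+c)/c) ^ (c/(r+c)) ≤ 1 := key.trans huv
  have key2 : (u*(r+c)/r) ^ r * (v*(r+c)/c) ^ c ≤ 1 := by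
    have h := Real.rpow_le_one (by positivity) key1 hrc.le
    rwa [Real.mul_rpow (by positivity) (by positivity), ← Real.rpow_mul hp₁,
      ← Real.rpow_mul hp₂, div_mul_cancel₀ _ hrc.ne', div_mul_cancel₀ _ hrc.ne'] at h
  have key3 : (u/r)^r * (v/c)^c * (r+c)^(r+c) ≤ 1 := by
    have h1 : (u*(r+c)/r) ^ r * (v*(r+c)/c) ^ c
        = (u/r)^r * (v/c)^c * (r+c)^(r+c) := by
      rw [show u*(r+c)/r = (u/r)*(r+c) by ring, show v*(r+c)/c = (v/c)*(r+c) by ring,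
        Real.mul_rpow (by positivity) hrc.le, Real.mul_rpow (by positivity) hrc.le,
        Real.rpow_add hrc]
      ring
    rwa [h1] at key2
  -- exact identities
  have hlamA : A / u = lam := by rw [hu_def]; field_simp
  have hlamR : R / w = lam := by rw [hw_def]; field_simp
  have hSv : (V / v) ^ c = S := by
    rw [hv_def, show V / (V * S ^ (1-ν)) = (S ^ (1-ν))⁻¹ by field_simp,
      ← Real.rpow_neg hS.le, ← Real.rpow_mul hS.le,
      show -(1-ν) * c = 1 by rw [hc_def]; field_simp; ring, Real.rpow_one]
  have hRw : R ^ (1-r) ≤ (R/w) ^ (1-r) := by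
    apply Real.rpow_le_rpow hR.le _ h1r.le
    rw [le_div_iff₀ hw]
    nlinarith
  have hRr : (R/(1-r))^(1-r) * (1-r)^(1-r) = R^(1-r) := by
    rw [← Real.mul_rpow (by positivity) h1r.le, div_mul_cancel₀ _ h1r.ne']
  have e1 : ω * (A/r)^r * ((ν-1)*V)^c * (R/(1-r))^(1-r) * (r+c)^(r+c) * (1-r)^(1-r)
      = ω * ((A/u)^r * (V/v)^c) * (R^(1-r)) * ((u/r)^r * (v/c)^c * (r+c)^(r+c)) := by
    rw [show A/r = (A/u)*(u/r) by field_simp,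
      show (ν-1)*V = (V/v)*(v/c) by rw [hc_def]; field_simp,
      Real.mul_rpow (by positivity) (by positivity),
      Real.mul_rpow (by positivity) (by positivity), ← hRr]
    ring
  calc ω * (A/r)^r * ((ν-1)*V)^c * (R/(1-r))^(1-r) * (r+c)^(r+c) * (1-r)^(1-r)
      = ω * ((A/u)^r * (V/v)^c) * (R^(1-r)) * ((u/r)^r * (v/c)^c * (r+c)^(r+c)) := e1
    _ ≤ ω * ((A/u)^r * (V/v)^c) * ((R/w)^(1-r)) * 1 := by
        apply mul_le_mul (by apply mul_le_mul_of_nonneg_left hRw (by positivity)) key3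
          (by positivity) (by positivity)
    _ = ω * lam * S := by
        rw [mul_one, hlamA, hlamR, hSv]
        rw [show ω * (lam ^ r * S) * lam ^ (1-r) = ω * (lam ^ r * lam ^ (1-r)) * S by ring,
          ← Real.rpow_add hlam]
        norm_num
end

section
/- Let ν > 1 and ω, A, V, R > 0, and for r ∈ (0,1) define q(r) = ω·(A/r)^r·((ν−1)·V)^{1/(ν−1)}·(R/(1−r))^{1−r}·(r + 1/(ν−1))^{r+1/(ν−1)}·(1−r)^{1−r}. Then the function r ↦ log(q(r)) is strictly concave on the open interval (0,1). -/
set_option autoImplicit false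

open Real Set

private lemma strictConcaveOn_congr {s : Set ℝ} {f g : ℝ → ℝ}
    (h : Set.EqOn f g s) (hg : StrictConcaveOn ℝ s g) : StrictConcaveOn ℝ s f := by
  refine ⟨hg.1, fun x hx y hy hxy a b ha hb hab => ?_⟩
  rw [h hx, h hy, h (hg.1 hx hy ha.le hb.le hab)]
  exact hg.2 hx hy hxy ha hb hab

private lemma aux_strictConcave (a b k : ℝ) (hk : 0 < k) :
    StrictConcaveOn ℝ (Set.Ioo (0 : ℝ) 1)
      (fun r : ℝ => a + r * b - r * Real.log r + (r + k) * Real.log (r + k)) := by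
  set g : ℝ → ℝ := fun r => a + r * b - r * Real.log r + (r + k) * Real.log (r + k) with hg
  set g' : ℝ → ℝ := fun r => b - Real.log r + Real.log (r + k) with hg'
  have hd1 : ∀ x ∈ Ioo (0:ℝ) 1, HasDerivAt g (g' x) x := by
    intro x hx
    have hxp : (0:ℝ) < x := hx.1
    have hx0 : x ≠ 0 := hx.1.ne'
    have hxk : x + k ≠ 0 := by positivity
    have h1 : HasDerivAt (fun r : ℝ => r * Real.log r) (1 * Real.log x + x * x⁻¹) x :=
      (hasDerivAt_id x).mul (Real.hasDerivAt_log hx0)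
    have hik : HasDerivAt (fun r : ℝ => r + k) 1 x := by
      simpa using (hasDerivAt_id x).add_const k
    have h2 : HasDerivAt (fun r : ℝ => (r + k) * Real.log (r + k))
        (1 * Real.log (x + k) + (x + k) * ((x + k)⁻¹ * 1)) x :=
      hik.mul ((Real.hasDerivAt_log hxk).comp (h := fun r : ℝ => r + k) x hik)
    have h3 : HasDerivAt (fun r : ℝ => a + r * b) b x := by
      simpa using ((hasDerivAt_id x).mul_const b).const_add a
    have := (h3.sub h1).add h2
    refine this.congr_deriv ?_
    field_simp [hg']
    ring
  have hd2 : ∀ x ∈ Ioo (0:ℝ) 1, HasDerivAt g' (-x⁻¹ + (x + k)⁻¹) x := by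
    intro x hx
    have hxp : (0:ℝ) < x := hx.1
    have hx0 : x ≠ 0 := hx.1.ne'
    have hxk : x + k ≠ 0 := by positivity
    have hik : HasDerivAt (fun r : ℝ => r + k) 1 x := by
      simpa using (hasDerivAt_id x).add_const k
    have h1 : HasDerivAt (fun r : ℝ => Real.log (r + k)) ((x + k)⁻¹ * 1) x :=
      (Real.hasDerivAt_log hxk).comp (h := fun r : ℝ => r + k) x hik
    have h2 : HasDerivAt (fun r : ℝ => b - Real.log r) (0 - x⁻¹) x :=
      (hasDerivAt_const x b).sub (Real.hasDerivAt_log hx0)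
    refine (h2.add h1).congr_deriv ?_
    ring
  have hopen : IsOpen (Ioo (0:ℝ) 1) := isOpen_Ioo
  have hder : ∀ x ∈ Ioo (0:ℝ) 1, deriv g x = g' x := fun x hx => (hd1 x hx).deriv
  apply strictConcaveOn_of_deriv2_neg (convex_Ioo 0 1)
  · intro x hx
    exact ((hd1 x hx).differentiableAt).continuousAt.continuousWithinAt
  · intro x hx
    rw [hopen.interior_eq] at hx
    have heq : deriv g =ᶠ[nhds x] g' :=
      Filter.eventuallyEq_of_mem (hopen.mem_nhds hx) hder
    have : deriv^[2] g x = deriv g' x := by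
      simp only [Function.iterate_succ, Function.iterate_zero, Function.comp_apply, id]
      exact heq.deriv_eq
    rw [this, (hd2 x hx).deriv]
    have hlt : x⁻¹ > (x + k)⁻¹ := by
      apply inv_strictAnti₀ hx.1
      linarith
    linarith

/-- The logarithm of the dual function q of the geometric program (P1) is strictly
    concave on the open interval (0,1). -/
theorem log_dual_strictConcave (ν ω A V R : ℝ) (hν : 1 < ν)
    (hω : 0 < ω) (hA : 0 < A) (hV : 0 < V) (hR : 0 < R) :
    StrictConcaveOn ℝ (Set.Ioo (0 : ℝ) 1) (fun r : ℝ =>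
      Real.log (ω * (A / r) ^ r * ((ν - 1) * V) ^ (1 / (ν - 1)) *
        (R / (1 - r)) ^ (1 - r) * (r + 1 / (ν - 1)) ^ (r + 1 / (ν - 1)) *
        (1 - r) ^ (1 - r))) := by
  have hk : (0:ℝ) < 1 / (ν - 1) := by
    have : (0:ℝ) < ν - 1 := by linarith
    positivity
  set k := 1 / (ν - 1) with hkdef
  set a := Real.log ω + k * Real.log ((ν - 1) * V) + Real.log R with hadef
  set b := Real.log A - Real.log R with hbdef
  apply strictConcaveOn_congr (g := fun r : ℝ =>
    a + r * b - r * Real.log r + (r + k) * Real.log (r + k))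
  · intro r hr
    have hr0 : 0 < r := hr.1
    have hr2 : r < 1 := hr.2
    have hr1 : 0 < 1 - r := by linarith
    have hν1 : (0:ℝ) < ν - 1 := by linarith
    have h1 : (0:ℝ) < A / r := by positivity
    have h2 : (0:ℝ) < (ν - 1) * V := by positivity
    have h3 : (0:ℝ) < R / (1 - r) := by positivity
    have h4 : (0:ℝ) < r + k := by positivity
    simp only
    rw [Real.log_mul (by positivity) (Real.rpow_pos_of_pos hr1 _).ne',
        Real.log_mul (by positivity) (Real.rpow_pos_of_pos h4 _).ne',
        Real.log_mul (by positivity) (Real.rpow_pos_of_pos h3 _).ne',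
        Real.log_mul (by positivity) (Real.rpow_pos_of_pos h2 _).ne',
        Real.log_mul hω.ne' (Real.rpow_pos_of_pos h1 _).ne',
        Real.log_rpow h1, Real.log_rpow h2, Real.log_rpow h3, Real.log_rpow h4,
        Real.log_rpow hr1, Real.log_div hA.ne' hr0.ne', Real.log_div hR.ne' hr1.ne']
    ring
  · exact aux_strictConcave a b k hk
end
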